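/- Let (b₀,b₁,…) be a sequence of integers, let m ≥ 1 be the least index with b_m ∈ {0,1,−1}, and suppose b_m = 1 or b_m = −1. Let (v_n) and (v'_n) be the sequences of convergents of [b₀,b₁,…] and of Φ(b₀,b₁,…) respectively. Then v'_n = v_n for 0 ≤ n ≤ m−2, and v'_n = v_{n+1} for n ≥ m−1. -/

import Mathlib

open Filter Topology OnePoint

/-- The Möbius map `z ↦ b - 1/z` on the one-point compactification `ℝ∞` of `ℝ`. -/
noncomputable def mob (b : ℤ) (z : OnePoint ℝ) : OnePoint ℝ :=
  Option.elim z ((b : ℝ) : OnePoint ℝ)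
    (fun x => if x = 0 then (∞ : OnePoint ℝ) else (((b : ℝ) - 1 / x : ℝ) : OnePoint ℝ))

/-- Value of a finite continued fraction `[b₀, …, b_m]`, i.e. `s₀(s₁(⋯ s_m(∞)))`. -/
noncomputable def cfVal : List ℤ → OnePoint ℝ
  | [] => ∞
  | b :: t => mob b (cfVal t)

/-- The `n`th convergent `v_n = S_n(∞)` of the continued fraction `[b₀, b₁, …]`. -/
noncomputable def cfConv (b : ℕ → ℤ) (n : ℕ) : OnePoint ℝ :=
  cfVal ((List.range (n + 1)).map b)

/-- `m` is a positive index at which the coefficient is `0`, `1` or `-1`. -/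
def badIdx (b : ℕ → ℤ) (m : ℕ) : Prop :=
  1 ≤ m ∧ (b m = 0 ∨ b m = 1 ∨ b m = -1)

instance (b : ℕ → ℤ) : DecidablePred (badIdx b) := fun m => by
  unfold badIdx; infer_instance

-- The singularization map `Φ` on integer sequences.
open Classical in
noncomputable def Phi (b : ℕ → ℤ) : ℕ → ℤ :=
  if h : ∃ m, badIdx b m then
    let m := Nat.find h
    if b m = 0 then
      fun k => if k + 1 < m then b k
        else if k = m - 1 then b (m - 1) + b (m + 1)
        else b (k + 2)
    else if b m = 1 then
      fun k => if k + 1 < m then b k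
        else if k = m - 1 then b (m - 1) - 1
        else if k = m then b (m + 1) - 1
        else b (k + 1)
    else
      fun k => if k + 1 < m then b k
        else if k = m - 1 then b (m - 1) + 1
        else if k = m then b (m + 1) + 1
        else b (k + 1)
  else b

-- `p(b) ∈ ℕ ∪ {∞}`: the least positive index at which `0`, `1` or `-1` occurs.
open Classical in
noncomputable def pIdx (b : ℕ → ℤ) : ℕ∞ :=
  if h : ∃ m, badIdx b m then (Nat.find h : ℕ∞) else ⊤

/-- `p⁽ⁿ⁾ → ∞` as `n → ∞`. -/
def PTendsToTop (b : ℕ → ℤ) : Prop :=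
  ∀ N : ℕ, ∃ M : ℕ, ∀ n ≥ M, (N : ℕ∞) < pIdx (Phi^[n] b)

/-- `p = liminf pⁿ`, as a natural number (junk value if the liminf is `∞`). -/
noncomputable def pLim (b : ℕ → ℤ) : ℕ :=
  (Filter.liminf (fun n => pIdx (Phi^[n] b)) Filter.atTop).toNat

/-- `q⁽ⁿ⁾ = |b⁽ⁿ⁾_{p-1}|`. -/
noncomputable def qSeq (b : ℕ → ℤ) (n : ℕ) : ℕ :=
  ((Phi^[n] b) (pLim b - 1)).natAbs

/-- Two continued fractions have the same tail. -/
def SameTail (b c : ℕ → ℤ) : Prop := ∃ r s : ℕ, ∀ k : ℕ, b (r + k) = c (s + k)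

/-- `bstar` is the limit continued fraction: each coefficient of `Φⁿ(b)` stabilises on it. -/
def EventuallyCoeff (b bstar : ℕ → ℤ) : Prop :=
  ∀ k : ℕ, ∃ N : ℕ, ∀ n ≥ N, Phi^[n] b k = bstar k

/-- The point of `ℝ∞` represented by the integer fraction `a/b` (`∞` when `b = 0`). -/
noncomputable def intPt (a b : ℤ) : OnePoint ℝ :=
  if b = 0 then ∞ else (((a : ℝ) / (b : ℝ)) : OnePoint ℝ)

/-- Adjacency in the Farey graph: `x = a/b`, `y = c/d` with `ad - bc = ±1`. -/
def FareyAdj (x y : OnePoint ℝ) : Prop :=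
  ∃ a b c d : ℤ, x = intPt a b ∧ y = intPt c d ∧
    (a * d - b * c = 1 ∨ a * d - b * c = -1)

/-- `x` is an extended rational, i.e. a member of `ℚ∞ = ℚ ∪ {∞} ⊆ ℝ∞`. -/
def IsExtRat (x : OnePoint ℝ) : Prop :=
  x = ∞ ∨ ∃ q : ℚ, x = ((q : ℝ) : OnePoint ℝ)

-- One step of the index-tracking sequence, for the current coefficient sequence `c`.
open Classical in
noncomputable def eStep (c : ℕ → ℤ) (e : ℕ) : Option ℕ :=
  if h : ∃ m, badIdx c m then
    let m := Nat.find h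
    if c m = 0 then
      if e + 2 ≤ m then Option.some e
      else if e = m - 1 ∨ e = m then (none : Option ℕ)
      else Option.some (e - 2)
    else
      if e + 2 ≤ m then Option.some e
      else if e = m - 1 then (none : Option ℕ)
      else Option.some (e - 1)
  else Option.some e

/-- The index-tracking sequence `e⁽⁰⁾(k), e⁽¹⁾(k), …` (`none` once it has terminated). -/
noncomputable def eSeq (b : ℕ → ℤ) (k : ℕ) : ℕ → Option ℕ
  | 0 => Option.some k
  | n + 1 => (eSeq b k n).bind (eStep (Phi^[n] b))


-- ===== auxiliary lemmas for stmt12 =====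

lemma mob_coe' (b : ℤ) (x : ℝ) : mob b (x : OnePoint ℝ) =
    if x = 0 then (∞ : OnePoint ℝ) else (((b : ℝ) - 1 / x : ℝ) : OnePoint ℝ) := rfl
lemma mob_infty' (b : ℤ) : mob b ∞ = ((b : ℝ) : OnePoint ℝ) := rfl

noncomputable def shiftPt (c : ℤ) (z : OnePoint ℝ) : OnePoint ℝ := Option.map (fun x => x - (c:ℝ)) z

lemma shiftPt_infty (c : ℤ) : shiftPt c ∞ = ∞ := rfl
lemma shiftPt_coe (c : ℤ) (x : ℝ) : shiftPt c (x : OnePoint ℝ) = ((x - (c:ℝ) : ℝ) : OnePoint ℝ) := rfl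

lemma shift_mob (c y : ℤ) (z : OnePoint ℝ) : shiftPt c (mob y z) = mob (y - c) z := by
  cases z with
  | infty => rw [mob_infty', mob_infty', shiftPt_coe]; push_cast; ring_nf
  | coe t =>
    by_cases ht : t = 0
    · simp [mob_coe', ht, shiftPt_infty]
    · rw [mob_coe', mob_coe', if_neg ht, if_neg ht, shiftPt_coe]
      push_cast; ring_nf

lemma mob_mob_one (x : ℤ) (w : OnePoint ℝ) :
    mob x (mob 1 w) = mob (x - 1) (shiftPt 1 w) := by
  cases w with
  | infty =>
    rw [mob_infty', mob_coe', if_neg (by norm_num), shiftPt_infty, mob_infty', OnePoint.coe_eq_coe]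
    push_cast; norm_num
  | coe u =>
    by_cases hu : u = 0
    · subst hu
      rw [mob_coe', if_pos rfl, mob_infty', shiftPt_coe, zero_sub, mob_coe',
        if_neg (by norm_num), OnePoint.coe_eq_coe]
      push_cast; norm_num
    · rw [mob_coe', if_neg hu, shiftPt_coe]
      by_cases h1 : ((1:ℤ):ℝ) - 1/u = 0
      · have h2 : u - ((1:ℤ):ℝ) = 0 := by
          push_cast at h1 ⊢; field_simp at h1; linarith
        rw [mob_coe', if_pos h1, mob_coe', if_pos h2]
      · have h2 : u - ((1:ℤ):ℝ) ≠ 0 := by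
          intro h; apply h1; push_cast at h ⊢
          have hh : u = 1 := by linarith
          rw [hh]; norm_num
        rw [mob_coe', if_neg h1, mob_coe', if_neg h2, OnePoint.coe_eq_coe]
        push_cast at h1 h2 ⊢
        field_simp
        ring

lemma mob_mob_negone (x : ℤ) (w : OnePoint ℝ) :
    mob x (mob (-1) w) = mob (x - (-1)) (shiftPt (-1) w) := by
  cases w with
  | infty =>
    rw [mob_infty', mob_coe', if_neg (by norm_num), shiftPt_infty, mob_infty', OnePoint.coe_eq_coe]
    push_cast; norm_num
  | coe u =>
    by_cases hu : u = 0
    · subst hu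
      rw [mob_coe', if_pos rfl, mob_infty', shiftPt_coe, zero_sub, mob_coe',
        if_neg (by norm_num), OnePoint.coe_eq_coe]
      push_cast; norm_num
    · rw [mob_coe', if_neg hu, shiftPt_coe]
      by_cases h1 : ((-1:ℤ):ℝ) - 1/u = 0
      · have h2 : u - ((-1:ℤ):ℝ) = 0 := by
          push_cast at h1 ⊢; field_simp at h1; linarith
        rw [mob_coe', if_pos h1, mob_coe', if_pos h2]
      · have h2 : u - ((-1:ℤ):ℝ) ≠ 0 := by
          intro h; apply h1; push_cast at h ⊢
          have hh : u = -1 := by linarith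
          rw [hh]; norm_num
        rw [mob_coe', if_neg h1, mob_coe', if_neg h2, OnePoint.coe_eq_coe]
        push_cast at h1 h2 ⊢
        have h3 : (1:ℝ) + u ≠ 0 := fun h => h2 (by linarith)
        have e1 : (-1:ℝ) - 1/u = (-(1+u))/u := by field_simp; ring
        rw [e1, one_div_div, div_neg, sub_neg_eq_add, show u - -1 = 1 + u by ring]
        have e2 : u/(1+u) = 1 - 1/(1+u) := by field_simp; ring
        rw [e2]
        ring

/-- head shift of a list (identity on the empty list) -/
def shiftHead (c : ℤ) : List ℤ → List ℤ
  | [] => []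
  | y :: s => (y - c) :: s

lemma cfVal_shiftHead (c : ℤ) (t : List ℤ) : cfVal (shiftHead c t) = shiftPt c (cfVal t) := by
  cases t with
  | nil => rfl
  | cons y s =>
    show cfVal ((y - c) :: s) = shiftPt c (mob y (cfVal s))
    rw [shift_mob]
    rfl

lemma cfVal_sing (ε x : ℤ) (hε : ε = 1 ∨ ε = -1) (t : List ℤ) :
    cfVal (x :: ε :: t) = cfVal ((x - ε) :: shiftHead ε t) := by
  show mob x (mob ε (cfVal t)) = mob (x - ε) (cfVal (shiftHead ε t))
  rw [cfVal_shiftHead]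
  rcases hε with rfl | rfl
  · exact mob_mob_one x (cfVal t)
  · exact mob_mob_negone x (cfVal t)

lemma cfVal_append_congr (l : List ℤ) {A B : List ℤ} (h : cfVal A = cfVal B) :
    cfVal (l ++ A) = cfVal (l ++ B) := by
  induction l with
  | nil => exact h
  | cons a s ih => show mob a (cfVal (s ++ A)) = mob a (cfVal (s ++ B)); rw [ih]

lemma map_range_succ (c : ℕ → ℤ) (j d : ℕ) :
    (List.range (d+1)).map (fun i => c (j + i)) = c j :: (List.range d).map (fun i => c (j+1+i)) := by
  rw [List.range_succ_eq_map, List.map_cons, List.map_map]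
  simp only [Nat.add_zero]
  congr 1
  apply List.map_congr_left
  intro i _
  simp only [Function.comp_apply]
  congr 1
  omega

lemma map_range_add (c : ℕ → ℤ) (j d : ℕ) :
    (List.range (j + d)).map c = (List.range j).map c ++ (List.range d).map (fun i => c (j + i)) := by
  rw [List.range_add, List.map_append, List.map_map]
  rfl

lemma stmt12_aux (b : ℕ → ℤ) (m : ℕ) (hm : 1 ≤ m) (ε : ℤ) (hε : ε = 1 ∨ ε = -1)
    (hbm : b m = ε) (c : ℕ → ℤ)
    (hc1 : ∀ k, k + 1 < m → c k = b k)
    (hc2 : c (m-1) = b (m-1) - ε)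
    (hc3 : c m = b (m+1) - ε)
    (hc4 : ∀ k, m < k → c k = b (k+1)) :
    (∀ n : ℕ, n + 2 ≤ m → cfConv c n = cfConv b n) ∧
    (∀ n : ℕ, m ≤ n + 1 → cfConv c n = cfConv b (n + 1)) := by
  constructor
  · intro n hn
    unfold cfConv
    congr 1
    apply List.map_congr_left
    intro i hi
    rw [List.mem_range] at hi
    exact hc1 i (by omega)
  · intro n hn
    obtain ⟨k, rfl⟩ : ∃ k, m = k + 1 := ⟨m - 1, by omega⟩
    obtain ⟨d, rfl⟩ : ∃ d, n = k + d := ⟨n - k, by omega⟩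
    unfold cfConv
    have e1 : k + d + 1 = k + (d + 1) := by omega
    have e2 : k + (d + 1) + 1 = k + (d + 2) := by omega
    rw [e1, e2, map_range_add c k (d+1), map_range_add b k (d+2)]
    have hpre : (List.range k).map c = (List.range k).map b := by
      apply List.map_congr_left
      intro i hi
      rw [List.mem_range] at hi
      exact hc1 i (by omega)
    rw [hpre]
    apply cfVal_append_congr
    -- B side
    rw [show d + 2 = (d + 1) + 1 from rfl, map_range_succ b k, map_range_succ b (k+1),
      map_range_succ c k]
    rw [show b (k+1) = ε from hbm]
    rw [cfVal_sing _ _ hε]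
    have hck : c k = b k - ε := by
      have : k = k + 1 - 1 := rfl
      simpa using hc2
    rw [hck]
    congr 1
    -- tails
    cases d with
    | zero => rfl
    | succ e =>
      rw [map_range_succ c (k+1), map_range_succ b (k+2)]
      simp only [shiftHead]
      have hck1 : c (k + 1) = b (k + 2) - ε := by rw [hc3]
      rw [hck1]
      congr 2
      apply List.map_congr_left
      intro i hi
      rw [hc4 _ (by omega)]
      congr 1
      omega

/-- **Lemma 5, case `b_m = ±1`.** If `m ≥ 1` is the least index with `b_m ∈ {0, 1, -1}` and
`b_m = ±1`, then the convergents of `Φ(b)` are `v₀, …, v_{m-2}, v_m, v_{m+1}, …`. -/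
theorem stmt12 (b : ℕ → ℤ) (m : ℕ) (hm : 1 ≤ m)
    (hmin : ∀ j : ℕ, 1 ≤ j → j < m → ¬ (b j = 0 ∨ b j = 1 ∨ b j = -1))
    (hbm : b m = 1 ∨ b m = -1) :
    (∀ n : ℕ, n + 2 ≤ m → cfConv (Phi b) n = cfConv b n) ∧
    (∀ n : ℕ, m ≤ n + 1 → cfConv (Phi b) n = cfConv b (n + 1)) := by
  have hex : ∃ m', badIdx b m' := ⟨m, hm, Or.inr hbm⟩
  have hfind : Nat.find hex = m := by
    rw [Nat.find_eq_iff]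
    refine ⟨⟨hm, Or.inr hbm⟩, fun j hj hbad => ?_⟩
    rcases hbad with ⟨hj1, hbj⟩
    exact hmin j hj1 hj hbj
  have hb0 : b m ≠ 0 := by rcases hbm with h | h <;> omega
  rcases hbm with hbm1 | hbm1
  · have hPhi : ∀ k, Phi b k = (if k + 1 < m then b k
        else if k = m - 1 then b (m-1) - 1 else if k = m then b (m+1) - 1 else b (k+1)) := by
      intro k
      unfold Phi
      rw [dif_pos hex]
      simp only [hfind, if_neg hb0, if_pos hbm1]
    refine stmt12_aux b m hm 1 (Or.inl rfl) hbm1 (Phi b) ?_ ?_ ?_ ?_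
    · intro k hk; rw [hPhi k, if_pos hk]
    · rw [hPhi]; rw [if_neg (by omega), if_pos rfl]
    · rw [hPhi]; rw [if_neg (by omega), if_neg (by omega), if_pos rfl]
    · intro k hk
      rw [hPhi k, if_neg (by omega), if_neg (by omega), if_neg (by omega)]
  · have hb1 : b m ≠ 1 := by omega
    have hPhi : ∀ k, Phi b k = (if k + 1 < m then b k
        else if k = m - 1 then b (m-1) + 1 else if k = m then b (m+1) + 1 else b (k+1)) := by
      intro k
      unfold Phi
      rw [dif_pos hex]
      simp only [hfind, if_neg hb0, if_neg hb1]
    refine stmt12_aux b m hm (-1) (Or.inr rfl) hbm1 (Phi b) ?_ ?_ ?_ ?_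
    · intro k hk; rw [hPhi k, if_pos hk]
    · rw [hPhi]; rw [if_neg (by omega), if_pos rfl]; ring
    · rw [hPhi]; rw [if_neg (by omega), if_neg (by omega), if_pos rfl]; ring
    · intro k hk
      rw [hPhi k, if_neg (by omega), if_neg (by omega), if_neg (by omega)]
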